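/- Let M be a totally real number field that is Galois over ℚ, with m = [M : ℚ]. Let x ∈ 𝒪_M be such that |σ(x)| > 1 for every ring homomorphism σ : M → ℝ. Then for every γ ∈ Gal(M/ℚ) one has |N_{M/ℚ}(x − γ(x))| ≤ 2^m · N_{M/ℚ}(x²). -/

import Mathlib

open NumberField

/-- From a complex embedding with all-real image, build a real embedding. -/
noncomputable def realHomAux {M : Type*} [Field M]
    (τ : M →+* ℂ) (htr : ∀ y : M, (τ y).im = 0) : M →+* ℝ where
  toFun y := (τ y).re
  map_one' := by simp
  map_mul' a b := by
    simp [Complex.mul_re, htr a, htr b]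
  map_zero' := by simp
  map_add' a b := by simp [Complex.add_re]

lemma realHomAux_spec {M : Type*} [Field M]
    (τ : M →+* ℂ) (htr : ∀ y : M, (τ y).im = 0) (y : M) :
    τ y = ((realHomAux τ htr y : ℝ) : ℂ) := by
  apply Complex.ext
  · simp [realHomAux]
  · simp [htr y]

theorem stmt_7 (M : Type*) [Field M] [NumberField M] [IsGalois ℚ M]
    (htr : ∀ (σ : M →+* ℂ) (y : M), (σ y).im = 0)
    (m : ℕ) (hm : m = Module.finrank ℚ M)
    (x : 𝓞 M) (hx : ∀ σ : M →+* ℝ, 1 < |σ (algebraMap (𝓞 M) M x)|)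
    (γ : M ≃ₐ[ℚ] M) :
    |Algebra.norm ℚ (algebraMap (𝓞 M) M x - γ (algebraMap (𝓞 M) M x))|
      ≤ 2 ^ m * Algebra.norm ℚ ((algebraMap (𝓞 M) M x) ^ 2) := by
  set y := algebraMap (𝓞 M) M x with hy
  -- key: every complex embedding has absolute value > 1 at y
  have key : ∀ τ : M →+* ℂ, 1 < ‖τ y‖ := by
    intro τ
    have := hx (realHomAux τ (htr τ))
    rw [realHomAux_spec τ (htr τ) y, Complex.norm_real, Real.norm_eq_abs]
    exact this
  -- product formula for norms, in ℝ
  have normprod : ∀ z : M, |(Algebra.norm ℚ z : ℝ)|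
      = ∏ σ : M →ₐ[ℚ] ℂ, ‖σ z‖ := by
    intro z
    have h := Algebra.norm_eq_prod_embeddings ℚ ℂ z
    have := congrArg (‖·‖) h
    rw [norm_prod] at this
    rw [← this]
    simp only [eq_ratCast]
    rw [← Real.norm_eq_abs, ← Complex.norm_real]
    norm_cast
    rw [← Rat.norm_cast_real, Real.norm_eq_abs, Rat.cast_abs]
  have card : Fintype.card (M →ₐ[ℚ] ℂ) = m := by
    rw [hm, ← NumberField.Embeddings.card M ℂ]
    exact Fintype.card_congr (RingHom.equivRatAlgHom M ℂ).symm
  -- norm of γ y equals norm of y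
  have hnormγ : Algebra.norm ℚ (γ y) = Algebra.norm ℚ y :=
    Algebra.norm_eq_of_algEquiv γ y
  -- main estimate in ℝ
  have main : |(Algebra.norm ℚ (y - γ y) : ℝ)|
      ≤ 2 ^ m * (Algebra.norm ℚ (y ^ 2) : ℝ) := by
    have hsq : (Algebra.norm ℚ (y ^ 2) : ℝ) = |(Algebra.norm ℚ y : ℝ)| ^ 2 := by
      rw [map_pow, sq_abs]; push_cast [map_pow]; ring
    rw [normprod, hsq]
    have step : ∀ σ : M →ₐ[ℚ] ℂ, ‖σ (y - γ y)‖
        ≤ 2 * (‖σ y‖ * ‖σ (γ y)‖) := by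
      intro σ
      have h1 : 1 < ‖σ y‖ := key σ.toRingHom
      have h2 : 1 < ‖σ (γ y)‖ := key ((σ.toRingHom).comp (γ : M →+* M))
      have htri : ‖σ (y - γ y)‖ ≤ ‖σ y‖ + ‖σ (γ y)‖ := by
        rw [map_sub]; exact norm_sub_le _ _
      nlinarith
    calc ∏ σ : M →ₐ[ℚ] ℂ, ‖σ (y - γ y)‖
        ≤ ∏ σ : M →ₐ[ℚ] ℂ, 2 * (‖σ y‖ * ‖σ (γ y)‖) :=
          Finset.prod_le_prod (fun σ _ => norm_nonneg _) (fun σ _ => step σ)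
      _ = 2 ^ m * ((∏ σ : M →ₐ[ℚ] ℂ, ‖σ y‖) *
            ∏ σ : M →ₐ[ℚ] ℂ, ‖σ (γ y)‖) := by
          rw [Finset.prod_mul_distrib, Finset.prod_const, Finset.card_univ, card,
            Finset.prod_mul_distrib]
      _ = 2 ^ m * |(Algebra.norm ℚ y : ℝ)| ^ 2 := by
          rw [← normprod, ← normprod, hnormγ, sq]
  -- transfer back to ℚ
  have := main
  rw [← Rat.cast_abs] at this
  exact_mod_cast this
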